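/- Let $f: \mathbb{R} \to [0,U]$ be Lebesgue measurable with $\int_{\mathbb{R}} f(x)\,dx = E \in (0,\infty)$. Then for any $b \in \mathbb{R}$, $\int_{\mathbb{R}} (x-b)^2 f(x)\,dx \geq \frac{E^3}{12 U^2}$, with equality if and only if $f(x) = U \cdot \mathbf{1}_{[b - E/(2U),\, b + E/(2U)]}(x)$ for almost every $x$. -/

import Mathlib

open MeasureTheory

/-- Among measurable `f : ℝ → [0,U]` with total mass `E`, the second moment about `b`
is at least `E³/(12U²)`, with equality iff `f` is a.e. the uniform density `U` on the
interval of length `E/U` centered at `b`. -/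
theorem stmt_11 (U E b : ℝ) (hU : 0 < U) (hE : 0 < E)
    (f : ℝ → ℝ) (hf : Measurable f) (hf0 : ∀ x, 0 ≤ f x) (hfU : ∀ x, f x ≤ U)
    (hmass : ∫⁻ x, ENNReal.ofReal (f x) ∂volume = ENNReal.ofReal E) :
    ENNReal.ofReal (E ^ 3 / (12 * U ^ 2)) ≤
        ∫⁻ x, ENNReal.ofReal ((x - b) ^ 2 * f x) ∂volume ∧
      ((∫⁻ x, ENNReal.ofReal ((x - b) ^ 2 * f x) ∂volume)
            = ENNReal.ofReal (E ^ 3 / (12 * U ^ 2)) ↔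
        f =ᵐ[volume]
          (Set.Icc (b - E / (2 * U)) (b + E / (2 * U))).indicator fun _ => U) := by
  set r := E / (2 * U) with hrdef
  have hr : 0 < r := by positivity
  set a := b - r with hadef
  set c := b + r with hcdef
  have hac : a ≤ c := by rw [hadef, hcdef]; linarith
  set I : ℝ → ℝ := (Set.Icc a c).indicator fun _ => U with hIdef
  have hImeas : Measurable I := measurable_const.indicator measurableSet_Icc
  have hI0 : ∀ x, 0 ≤ I x := fun x => Set.indicator_nonneg (fun _ _ => hU.le) x
  -- mass of I
  have hImass : ∫⁻ x, ENNReal.ofReal (I x) = ENNReal.ofReal E := by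
    have h1 : ∀ x, ENNReal.ofReal (I x)
        = (Set.Icc a c).indicator (fun _ => ENNReal.ofReal U) x := by
      intro x
      by_cases hx : x ∈ Set.Icc a c <;> simp [hIdef, Set.indicator_apply, hx]
    simp_rw [h1]
    rw [lintegral_indicator measurableSet_Icc _, setLIntegral_const, Real.volume_Icc,
      ← ENNReal.ofReal_mul hU.le]
    congr 1
    have hca : c - a = E / U := by rw [hadef, hcdef, hrdef]; ring
    rw [hca]
    field_simp
  -- second moment of I
  have hIformula : ∀ x, (x - b) ^ 2 * I x
      = (Set.Icc a c).indicator (fun x => (x - b) ^ 2 * U) x := by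
    intro x
    by_cases hx : x ∈ Set.Icc a c <;> simp [hIdef, Set.indicator_apply, hx]
  have hIintg : Integrable ((Set.Icc a c).indicator fun x => (x - b) ^ 2 * U) volume := by
    exact (Continuous.integrableOn_Icc (by continuity)).integrable_indicator measurableSet_Icc
  have hIval : (∫ x, (Set.Icc a c).indicator (fun x => (x - b) ^ 2 * U) x)
      = E ^ 3 / (12 * U ^ 2) := by
    rw [integral_indicator measurableSet_Icc, integral_Icc_eq_integral_Ioc,
      ← intervalIntegral.integral_of_le hac, intervalIntegral.integral_mul_const,
      intervalIntegral.integral_comp_sub_right (fun x => x ^ 2) b, integral_pow]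
    have h1 : c - b = r := by rw [hcdef]; ring
    have h2 : a - b = -r := by rw [hadef]; ring
    rw [h1, h2, hrdef]
    field_simp
    have hU3 : U ^ 3 * U⁻¹ ^ 3 = 1 := by rw [← mul_pow, mul_inv_cancel₀ hU.ne', one_pow]
    linear_combination (E ^ 3 * 3) * hU3
  have hIsq : ∫⁻ x, ENNReal.ofReal ((x - b) ^ 2 * I x)
      = ENNReal.ofReal (E ^ 3 / (12 * U ^ 2)) := by
    simp_rw [hIformula]
    rw [← ofReal_integral_eq_lintegral_ofReal hIintg
      (Filter.Eventually.of_forall fun x =>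
        Set.indicator_nonneg (fun y _ => by positivity) x), hIval]
  -- pointwise inequality
  have hpt : ∀ x, (x - b) ^ 2 * I x + r ^ 2 * f x ≤ (x - b) ^ 2 * f x + r ^ 2 * I x := by
    intro x
    by_cases hx : x ∈ Set.Icc a c
    · have hIx : I x = U := by simp [hIdef, hx]
      obtain ⟨h1, h2⟩ := hx
      rw [hadef] at h1; rw [hcdef] at h2
      have hsq : (x - b) ^ 2 ≤ r ^ 2 := by nlinarith
      rw [hIx]
      nlinarith [mul_nonneg (sub_nonneg.2 hsq) (sub_nonneg.2 (hfU x))]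
    · have hIx : I x = 0 := by simp [hIdef, Set.indicator_apply, hx]
      rw [hIx]
      rw [Set.mem_Icc, not_and_or, not_le, not_le, hadef, hcdef] at hx
      have hsq : r ^ 2 ≤ (x - b) ^ 2 := by rcases hx with h | h <;> nlinarith
      nlinarith [mul_le_mul_of_nonneg_right hsq (hf0 x)]
  -- measurability
  have mf : Measurable fun x => ENNReal.ofReal ((x - b) ^ 2 * f x) :=
    (((measurable_id.sub_const b).pow_const 2).mul hf).ennreal_ofReal
  have mI : Measurable fun x => ENNReal.ofReal ((x - b) ^ 2 * I x) :=
    (((measurable_id.sub_const b).pow_const 2).mul hImeas).ennreal_ofReal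
  set C : ENNReal := ENNReal.ofReal (r ^ 2) * ENNReal.ofReal E with hCdef
  have hCne : C ≠ ⊤ := ENNReal.mul_ne_top ENNReal.ofReal_ne_top ENNReal.ofReal_ne_top
  -- splitting lemmas
  have hsplit1 : ∫⁻ x, ENNReal.ofReal ((x - b) ^ 2 * I x + r ^ 2 * f x)
      = ENNReal.ofReal (E ^ 3 / (12 * U ^ 2)) + C := by
    have h1 : ∀ x, ENNReal.ofReal ((x - b) ^ 2 * I x + r ^ 2 * f x)
        = ENNReal.ofReal ((x - b) ^ 2 * I x)
          + ENNReal.ofReal (r ^ 2) * ENNReal.ofReal (f x) := by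
      intro x
      rw [ENNReal.ofReal_add (mul_nonneg (sq_nonneg _) (hI0 x))
        (mul_nonneg (sq_nonneg _) (hf0 x)), ENNReal.ofReal_mul (sq_nonneg r)]
    simp_rw [h1]
    rw [lintegral_add_left mI, lintegral_const_mul _ hf.ennreal_ofReal, hIsq, hmass]
  have hsplit2 : ∫⁻ x, ENNReal.ofReal ((x - b) ^ 2 * f x + r ^ 2 * I x)
      = (∫⁻ x, ENNReal.ofReal ((x - b) ^ 2 * f x)) + C := by
    have h1 : ∀ x, ENNReal.ofReal ((x - b) ^ 2 * f x + r ^ 2 * I x)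
        = ENNReal.ofReal ((x - b) ^ 2 * f x)
          + ENNReal.ofReal (r ^ 2) * ENNReal.ofReal (I x) := by
      intro x
      rw [ENNReal.ofReal_add (mul_nonneg (sq_nonneg _) (hf0 x))
        (mul_nonneg (sq_nonneg _) (hI0 x)), ENNReal.ofReal_mul (sq_nonneg r)]
    simp_rw [h1]
    rw [lintegral_add_left mf, lintegral_const_mul _ hImeas.ennreal_ofReal, hImass]
  have hmono : ∫⁻ x, ENNReal.ofReal ((x - b) ^ 2 * I x + r ^ 2 * f x)
      ≤ ∫⁻ x, ENNReal.ofReal ((x - b) ^ 2 * f x + r ^ 2 * I x) :=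
    lintegral_mono fun x => ENNReal.ofReal_le_ofReal (hpt x)
  have hineq : ENNReal.ofReal (E ^ 3 / (12 * U ^ 2))
      ≤ ∫⁻ x, ENNReal.ofReal ((x - b) ^ 2 * f x) := by
    rw [hsplit1, hsplit2] at hmono
    exact (ENNReal.add_le_add_iff_right hCne).1 hmono
  refine ⟨hineq, ?_, ?_⟩
  · -- equality implies f = I a.e.
    intro heq
    have hfin : ∫⁻ x, ENNReal.ofReal ((x - b) ^ 2 * I x + r ^ 2 * f x) ≠ ⊤ := by
      rw [hsplit1]; exact ENNReal.add_ne_top.2 ⟨ENNReal.ofReal_ne_top, hCne⟩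
    have hmeasψ : Measurable fun x => ENNReal.ofReal ((x - b) ^ 2 * I x + r ^ 2 * f x) :=
      ((((measurable_id.sub_const b).pow_const 2).mul hImeas).add
        (measurable_const.mul hf)).ennreal_ofReal
    have hmeasφ : Measurable fun x => ENNReal.ofReal ((x - b) ^ 2 * f x + r ^ 2 * I x) :=
      ((((measurable_id.sub_const b).pow_const 2).mul hf).add
        (measurable_const.mul hImeas)).ennreal_ofReal
    have hle : (fun x => ENNReal.ofReal ((x - b) ^ 2 * I x + r ^ 2 * f x))
        ≤ᵐ[volume] fun x => ENNReal.ofReal ((x - b) ^ 2 * f x + r ^ 2 * I x) :=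
      Filter.Eventually.of_forall fun x => ENNReal.ofReal_le_ofReal (hpt x)
    have hsub : ∫⁻ x, (ENNReal.ofReal ((x - b) ^ 2 * f x + r ^ 2 * I x)
        - ENNReal.ofReal ((x - b) ^ 2 * I x + r ^ 2 * f x)) = 0 := by
      rw [lintegral_sub hmeasψ hfin hle, hsplit1, hsplit2, heq, tsub_self]
    have hzero := (lintegral_eq_zero_iff (hmeasφ.sub hmeasψ)).1 hsub
    have haeeq : ∀ᵐ x ∂volume,
        (x - b) ^ 2 * f x + r ^ 2 * I x = (x - b) ^ 2 * I x + r ^ 2 * f x := by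
      filter_upwards [hzero] with x hx
      have hx' : ENNReal.ofReal ((x - b) ^ 2 * f x + r ^ 2 * I x)
          ≤ ENNReal.ofReal ((x - b) ^ 2 * I x + r ^ 2 * f x) := by
        simpa using tsub_eq_zero_iff_le.1 hx
      have heqe : ENNReal.ofReal ((x - b) ^ 2 * f x + r ^ 2 * I x)
          = ENNReal.ofReal ((x - b) ^ 2 * I x + r ^ 2 * f x) :=
        le_antisymm hx' (ENNReal.ofReal_le_ofReal (hpt x))
      have hnn1 : 0 ≤ (x - b) ^ 2 * f x + r ^ 2 * I x :=
        add_nonneg (mul_nonneg (sq_nonneg _) (hf0 x)) (mul_nonneg (sq_nonneg _) (hI0 x))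
      have hnn2 : 0 ≤ (x - b) ^ 2 * I x + r ^ 2 * f x :=
        add_nonneg (mul_nonneg (sq_nonneg _) (hI0 x)) (mul_nonneg (sq_nonneg _) (hf0 x))
      exact (ENNReal.ofReal_eq_ofReal_iff hnn1 hnn2).1 heqe
    have hne : ∀ᵐ x : ℝ ∂volume, x ≠ a ∧ x ≠ c := by
      have h1 : (volume : Measure ℝ) ({a} ∪ {c}) = 0 :=
        measure_union_null (measure_singleton a) (measure_singleton c)
      rw [ae_iff]
      convert h1 using 2
      ext x
      simp [not_and_or, not_ne_iff]
      tauto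
    filter_upwards [haeeq, hne] with x hx hx'
    obtain ⟨hxa, hxc⟩ := hx'
    have hfac : (x - b - r) * (x - b + r) ≠ 0 := by
      apply mul_ne_zero
      · intro h; apply hxc; rw [hcdef]; linarith
      · intro h; apply hxa; rw [hadef]; linarith
    have hsqne : (x - b) ^ 2 - r ^ 2 ≠ 0 := by
      intro h; apply hfac; linear_combination h
    have key : ((x - b) ^ 2 - r ^ 2) * (f x - I x) = 0 := by linear_combination hx
    have := (mul_eq_zero.1 key).resolve_left hsqne
    have : f x = I x := by linarith
    exact this
  · intro hae
    calc ∫⁻ x, ENNReal.ofReal ((x - b) ^ 2 * f x)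
        = ∫⁻ x, ENNReal.ofReal ((x - b) ^ 2 * I x) :=
          lintegral_congr_ae (hae.mono fun x hx => by simp only [hx])
      _ = ENNReal.ofReal (E ^ 3 / (12 * U ^ 2)) := hIsq
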